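/- Let f(y) = e^y + e^{2y}. Then the function α(y) = f^{(p+3)}(y) f^{(p+5)}(y) / (f^{(p+4)}(y))² is not constant on ℝ. Consequently there exist points P, Q ∈ ℝ^m for which no linear isomorphism φ : ℝ^m → ℝ^m satisfies φ(∇^k𝓡_P(ξ₁, ξ₂; η₁, …, η_k)ξ₃) = ∇^k𝓡_Q(φξ₁, φξ₂; φη₁, …, φη_k)(φξ₃) for all 0 ≤ k ≤ p+3 and all arguments; that is, M²_{2p+6} = M_{2p+6, e^y+e^{2y}} is not affine (p+3)-curvature homogeneous. -/

import Mathlib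

/- Setting of Gilkey–Nikčević: m = 2p+6, coordinates
   (x, y, z_0, …, z_p, x̄, ȳ, z̄_0, …, z̄_p) on ℝ^m. -/

/-- The model space ℝ^{2p+6}. -/
abbrev Vp (p : ℕ) := Fin (2*p+6) → ℝ

/-- index of the coordinate x -/
def ix (p : ℕ) : Fin (2*p+6) := ⟨0, by omega⟩
/-- index of the coordinate y -/
def iy (p : ℕ) : Fin (2*p+6) := ⟨1, by omega⟩
/-- index of the coordinate z_i -/
def iz (p : ℕ) (i : Fin (p+1)) : Fin (2*p+6) := ⟨2 + i.1, by have := i.2; omega⟩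
/-- index of the coordinate x̄ -/
def ixb (p : ℕ) : Fin (2*p+6) := ⟨p+3, by omega⟩
/-- index of the coordinate ȳ -/
def iyb (p : ℕ) : Fin (2*p+6) := ⟨p+4, by omega⟩
/-- index of the coordinate z̄_i -/
def izb (p : ℕ) (i : Fin (p+1)) : Fin (2*p+6) := ⟨p+5+i.1, by have := i.2; omega⟩

/-- F(y, z⃗) = f(y) + Σ_{i=0}^p y^{i+1} z_i, evaluated at the coordinates of the point P. -/
noncomputable def FF (p : ℕ) (f : ℝ → ℝ) (P : Vp p) : ℝ :=
  f (P (iy p)) + ∑ i : Fin (p+1), (P (iy p))^(i.1+1) * P (iz p i)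

/-- The symmetric bilinear form g_P on ℝ^{2p+6}: the only nonzero components on
basis vectors are g(∂x,∂x̄)=g(∂y,∂ȳ)=g(∂z_i,∂z̄_i)=1 and g(∂x,∂x) = -2F(y,z⃗). -/
noncomputable def gP (p : ℕ) (f : ℝ → ℝ) (P : Vp p) (u v : Vp p) : ℝ :=
  u (ix p) * v (ixb p) + u (ixb p) * v (ix p)
  + u (iy p) * v (iyb p) + u (iyb p) * v (iy p)
  + ∑ i : Fin (p+1), (u (iz p i) * v (izb p i) + u (izb p i) * v (iz p i))
  - 2 * FF p f P * (u (ix p) * v (ix p))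

/-- wedge component: (u ∧ v)_{ab} = u_a v_b - u_b v_a. -/
def wdg (p : ℕ) (a b : Fin (2*p+6)) (u v : Vp p) : ℝ := u a * v b - u b * v a

/-- The (4+k)-linear form ∇^kR_P on ℝ^{2p+6}: it is antisymmetric in arguments 1,2 and
in arguments 3,4, symmetric under interchanging the pair (1,2) with the pair (3,4),
and its only nonzero components on basis vectors up to these symmetries are
∇^kR_P(∂x,∂y,∂y,∂x;∂y,…,∂y) = f^{(k+2)}(y) + Σ_i (d/dy)^{k+2}(y^{i+1})·z_i,
∇^kR_P(∂x,∂y,∂z_i,∂x;∂y,…,∂y) = (d/dy)^{k+1}(y^{i+1}), and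
∇^kR_P(∂x,∂y,∂y,∂x;∂y,…,∂z_i,…,∂y) = (d/dy)^{k+1}(y^{i+1}) (∂z_i in one derivative slot).
This `def` is the unique multilinear map with these components, written out explicitly. -/
noncomputable def nR (p : ℕ) (f : ℝ → ℝ) (k : ℕ) (P : Vp p)
    (ξ₁ ξ₂ ξ₃ ξ₄ : Vp p) (η : Fin k → Vp p) : ℝ :=
  -(wdg p (ix p) (iy p) ξ₁ ξ₂ * wdg p (ix p) (iy p) ξ₃ ξ₄) *
    ((iteratedDeriv (k+2) f (P (iy p))
        + ∑ i : Fin (p+1), iteratedDeriv (k+2) (fun t => t^(i.1+1)) (P (iy p)) * P (iz p i))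
        * ∏ j : Fin k, η j (iy p)
      + ∑ i : Fin (p+1), iteratedDeriv (k+1) (fun t => t^(i.1+1)) (P (iy p)) *
          ∑ j : Fin k, η j (iz p i) * ∏ l ∈ Finset.univ.erase j, η l (iy p))
  - (∑ i : Fin (p+1), iteratedDeriv (k+1) (fun t => t^(i.1+1)) (P (iy p)) *
      (wdg p (ix p) (iy p) ξ₁ ξ₂ * wdg p (ix p) (iz p i) ξ₃ ξ₄
        + wdg p (ix p) (iz p i) ξ₁ ξ₂ * wdg p (ix p) (iy p) ξ₃ ξ₄)) * ∏ j : Fin k, η j (iy p)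

lemma iterDeriv_pow_closed (m n : ℕ) :
    iteratedDeriv n (fun t : ℝ => t^m) = fun t => (m.descFactorial n : ℝ) * t^(m-n) := by
  induction n with
  | zero => funext t; simp
  | succ n ih =>
    rw [iteratedDeriv_succ, ih]
    funext t
    rw [deriv_const_mul _ (differentiableAt_pow _), deriv_pow_field]
    rw [Nat.descFactorial_succ, Nat.sub_sub]
    push_cast
    ring

lemma iterDeriv_pow_zero (m n : ℕ) (hmn : m < n) (t : ℝ) :
    iteratedDeriv n (fun t : ℝ => t^m) t = 0 := by
  rw [iterDeriv_pow_closed]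
  simp [Nat.descFactorial_eq_zero_iff_lt.mpr hmn]

/-- the vector with g(v, ξ₄) = wdg (ix,iy) ξ₃ ξ₄ -/
def opV (p : ℕ) (ξ : Vp p) : Vp p :=
  fun j => if j.1 = p+4 then ξ (ix p) else if j.1 = p+3 then -(ξ (iy p)) else 0

lemma opV_ix (p : ℕ) (ξ : Vp p) : opV p ξ (ix p) = 0 := by
  simp only [opV]; rw [if_neg (by simp only [ix]; omega), if_neg (by simp only [ix]; omega)]

lemma opV_iy (p : ℕ) (ξ : Vp p) : opV p ξ (iy p) = 0 := by
  simp only [opV]; rw [if_neg (by simp only [iy]; omega), if_neg (by simp only [iy]; omega)]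

lemma opV_ixb (p : ℕ) (ξ : Vp p) : opV p ξ (ixb p) = -(ξ (iy p)) := by
  simp only [opV, ixb]; rw [if_neg (by omega)]; simp

lemma opV_iyb (p : ℕ) (ξ : Vp p) : opV p ξ (iyb p) = ξ (ix p) := by
  simp only [opV, iyb]; simp

lemma opV_iz (p : ℕ) (ξ : Vp p) (i : Fin (p+1)) : opV p ξ (iz p i) = 0 := by
  have := i.2
  simp only [opV]; rw [if_neg (by simp only [iz]; omega), if_neg (by simp only [iz]; omega)]

lemma opV_izb (p : ℕ) (ξ : Vp p) (i : Fin (p+1)) : opV p ξ (izb p i) = 0 := by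
  simp only [opV]; rw [if_neg (by simp only [izb]; omega), if_neg (by simp only [izb]; omega)]

lemma gP_opV (p : ℕ) (f : ℝ → ℝ) (P : Vp p) (c : ℝ) (ξ₃ ξ₄ : Vp p) :
    gP p f P (c • opV p ξ₃) ξ₄ = c * wdg p (ix p) (iy p) ξ₃ ξ₄ := by
  unfold gP wdg
  simp only [Pi.smul_apply, smul_eq_mul, opV_ix, opV_iy, opV_ixb, opV_iyb]
  rw [Finset.sum_eq_zero (fun i _ => by rw [opV_iz, opV_izb]; ring)]
  ring

lemma nR_high (p : ℕ) (f : ℝ → ℝ) (k : ℕ) (hk : p+1 ≤ k) (P ξ₁ ξ₂ ξ₃ ξ₄ : Vp p)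
    (η : Fin k → Vp p) :
    nR p f k P ξ₁ ξ₂ ξ₃ ξ₄ η =
      -(wdg p (ix p) (iy p) ξ₁ ξ₂ * wdg p (ix p) (iy p) ξ₃ ξ₄) *
        (iteratedDeriv (k+2) f (P (iy p)) * ∏ j : Fin k, η j (iy p)) := by
  have hz : ∀ (n : ℕ) (i : Fin (p+1)), p+1 < n →
      iteratedDeriv n (fun t : ℝ => t^(i.1+1)) (P (iy p)) = 0 := by
    intro n i hn
    exact iterDeriv_pow_zero _ _ (by have := i.2; omega) _
  unfold nR
  have s1 : (∑ i : Fin (p+1),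
      iteratedDeriv (k+2) (fun t => t^(i.1+1)) (P (iy p)) * P (iz p i)) = 0 :=
    Finset.sum_eq_zero fun i _ => by rw [hz _ _ (by omega)]; ring
  have s2 : (∑ i : Fin (p+1), iteratedDeriv (k+1) (fun t => t^(i.1+1)) (P (iy p)) *
      ∑ j : Fin k, η j (iz p i) * ∏ l ∈ Finset.univ.erase j, η l (iy p)) = 0 :=
    Finset.sum_eq_zero fun i _ => by rw [hz _ _ (by omega)]; ring
  have s3 : (∑ i : Fin (p+1), iteratedDeriv (k+1) (fun t => t^(i.1+1)) (P (iy p)) *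
      (wdg p (ix p) (iy p) ξ₁ ξ₂ * wdg p (ix p) (iz p i) ξ₃ ξ₄
        + wdg p (ix p) (iz p i) ξ₁ ξ₂ * wdg p (ix p) (iy p) ξ₃ ξ₄)) = 0 :=
    Finset.sum_eq_zero fun i _ => by rw [hz _ _ (by omega)]; ring
  rw [s1, s2, s3]
  ring

/-- ∂x -/
def eX (p : ℕ) : Vp p := fun j => if j.1 = 0 then 1 else 0
/-- ∂y -/
def eY (p : ℕ) : Vp p := fun j => if j.1 = 1 then 1 else 0

lemma eX_ix (p : ℕ) : eX p (ix p) = 1 := by simp [eX, ix]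
lemma eX_iy (p : ℕ) : eX p (iy p) = 0 := by simp [eX, iy]
lemma eY_ix (p : ℕ) : eY p (ix p) = 0 := by simp [eY, ix]
lemma eY_iy (p : ℕ) : eY p (iy p) = 1 := by simp [eY, iy]

lemma key_eq (p k : ℕ) (hk : p+1 ≤ k) (f : ℝ → ℝ) (P Q : Vp p) (φ : Vp p ≃ₗ[ℝ] Vp p)
    (h : ∀ opP opQ : Vp p → Vp p → (Fin k → Vp p) → Vp p → Vp p,
      (∀ (ξ₁ ξ₂ : Vp p) (η : Fin k → Vp p) (ξ₃ ξ₄ : Vp p),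
          gP p f P (opP ξ₁ ξ₂ η ξ₃) ξ₄ = nR p f k P ξ₁ ξ₂ ξ₃ ξ₄ η) →
      (∀ (ξ₁ ξ₂ : Vp p) (η : Fin k → Vp p) (ξ₃ ξ₄ : Vp p),
          gP p f Q (opQ ξ₁ ξ₂ η ξ₃) ξ₄ = nR p f k Q ξ₁ ξ₂ ξ₃ ξ₄ η) →
      ∀ (ξ₁ ξ₂ : Vp p) (η : Fin k → Vp p) (ξ₃ : Vp p),
          φ (opP ξ₁ ξ₂ η ξ₃) = opQ (φ ξ₁) (φ ξ₂) (fun j => φ (η j)) (φ ξ₃)) :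
    iteratedDeriv (k+2) f (P (iy p)) • φ (opV p (eX p)) =
      (wdg p (ix p) (iy p) (φ (eX p)) (φ (eY p)) * iteratedDeriv (k+2) f (Q (iy p))
        * ((φ (eY p)) (iy p))^k) • opV p (φ (eX p)) := by
  set DP := iteratedDeriv (k+2) f (P (iy p)) with hDP
  set DQ := iteratedDeriv (k+2) f (Q (iy p)) with hDQ
  have key := h
    (fun ξ₁ ξ₂ η ξ₃ =>
      (-(wdg p (ix p) (iy p) ξ₁ ξ₂) * DP * ∏ j : Fin k, η j (iy p)) • opV p ξ₃)
    (fun ξ₁ ξ₂ η ξ₃ =>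
      (-(wdg p (ix p) (iy p) ξ₁ ξ₂) * DQ * ∏ j : Fin k, η j (iy p)) • opV p ξ₃)
    (fun ξ₁ ξ₂ η ξ₃ ξ₄ => by rw [gP_opV, nR_high p f k hk]; ring)
    (fun ξ₁ ξ₂ η ξ₃ ξ₄ => by rw [gP_opV, nR_high p f k hk]; ring)
    (eX p) (eY p) (fun _ => eY p) (eX p)
  simp only [wdg, eX_ix, eX_iy, eY_ix, eY_iy, eY_iy] at key
  rw [map_smul] at key
  simp only [Finset.prod_const, Finset.card_univ, Fintype.card_fin] at key
  have hw : ((1:ℝ) * 1 - 0 * 0) = 1 := by norm_num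
  rw [hw] at key
  simp only [one_pow, mul_one, neg_mul, one_mul] at key
  rw [neg_smul, neg_smul, neg_inj] at key
  rw [key]
  congr 1

lemma iterDeriv_exp_sum (n : ℕ) (y : ℝ) :
    iteratedDeriv n (fun y => Real.exp y + Real.exp (2*y)) y
      = Real.exp y + 2^n * Real.exp (2*y) := by
  induction n generalizing y with
  | zero => simp
  | succ n ih =>
    rw [iteratedDeriv_succ]
    have hcongr : deriv (iteratedDeriv n fun y => Real.exp y + Real.exp (2 * y)) y
        = deriv (fun y => Real.exp y + 2^n * Real.exp (2*y)) y := by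
      apply Filter.EventuallyEq.deriv_eq
      filter_upwards with t using ih t
    rw [hcongr]
    have hexp2 : HasDerivAt (fun y : ℝ => Real.exp (2*y)) (Real.exp (2*y) * 2) y := by
      have h1 : HasDerivAt (fun y : ℝ => 2*y) 2 y := by
        simpa using (hasDerivAt_id y).const_mul (2:ℝ)
      exact (Real.hasDerivAt_exp (2*y)).comp y h1
    have h2 : HasDerivAt (fun y : ℝ => Real.exp y + 2^n * Real.exp (2*y))
        (Real.exp y + 2^n * (Real.exp (2*y) * 2)) y :=
      (Real.hasDerivAt_exp y).add (hexp2.const_mul _)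
    rw [h2.deriv]; ring

/-- for f(y) = e^y + e^{2y}, the invariant
α(y) = f^{(p+3)}(y) f^{(p+5)}(y) / (f^{(p+4)}(y))² is not constant; consequently there
are points P, Q for which no linear isomorphism φ of ℝ^m intertwines the curvature
operators ∇^k𝓡_P and ∇^k𝓡_Q (the unique operators with
g(∇^k𝓡(ξ₁,ξ₂;η⃗)ξ₃, ξ₄) = ∇^kR(ξ₁,ξ₂,ξ₃,ξ₄;η⃗)) for all 0 ≤ k ≤ p+3: M²_{2p+6} is not
affine (p+3)-curvature homogeneous. -/
theorem M2_not_affine_homogeneous (p : ℕ) :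
    (∃ y₁ y₂ : ℝ,
      iteratedDeriv (p+3) (fun y => Real.exp y + Real.exp (2*y)) y₁
          * iteratedDeriv (p+5) (fun y => Real.exp y + Real.exp (2*y)) y₁
          / (iteratedDeriv (p+4) (fun y => Real.exp y + Real.exp (2*y)) y₁)^2
      ≠ iteratedDeriv (p+3) (fun y => Real.exp y + Real.exp (2*y)) y₂
          * iteratedDeriv (p+5) (fun y => Real.exp y + Real.exp (2*y)) y₂
          / (iteratedDeriv (p+4) (fun y => Real.exp y + Real.exp (2*y)) y₂)^2) ∧
    (∃ P Q : Vp p, ¬ ∃ φ : Vp p ≃ₗ[ℝ] Vp p, ∀ k : ℕ, k ≤ p+3 →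
      ∀ (opP opQ : Vp p → Vp p → (Fin k → Vp p) → Vp p → Vp p),
        (∀ (ξ₁ ξ₂ : Vp p) (η : Fin k → Vp p) (ξ₃ ξ₄ : Vp p),
          gP p (fun y => Real.exp y + Real.exp (2*y)) P (opP ξ₁ ξ₂ η ξ₃) ξ₄
            = nR p (fun y => Real.exp y + Real.exp (2*y)) k P ξ₁ ξ₂ ξ₃ ξ₄ η) →
        (∀ (ξ₁ ξ₂ : Vp p) (η : Fin k → Vp p) (ξ₃ ξ₄ : Vp p),
          gP p (fun y => Real.exp y + Real.exp (2*y)) Q (opQ ξ₁ ξ₂ η ξ₃) ξ₄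
            = nR p (fun y => Real.exp y + Real.exp (2*y)) k Q ξ₁ ξ₂ ξ₃ ξ₄ η) →
        ∀ (ξ₁ ξ₂ : Vp p) (η : Fin k → Vp p) (ξ₃ : Vp p),
          φ (opP ξ₁ ξ₂ η ξ₃) = opQ (φ ξ₁) (φ ξ₂) (fun j => φ (η j)) (φ ξ₃)) := by
  set s : ℝ := ((2:ℝ)^(p+4))⁻¹ with hs_def
  set r : ℝ := ((2:ℝ)^(p+3))⁻¹ with hr_def
  have hspos : (0:ℝ) < s := by positivity
  have hrpos : (0:ℝ) < r := by positivity
  set y₁ : ℝ := Real.log s with hy1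
  set y₂ : ℝ := Real.log r with hy2
  have hes : Real.exp y₁ = s := Real.exp_log hspos
  have her : Real.exp y₂ = r := Real.exp_log hrpos
  have hes2 : Real.exp (2*y₁) = s^2 := by rw [two_mul, Real.exp_add, hes, sq]
  have her2 : Real.exp (2*y₂) = r^2 := by rw [two_mul, Real.exp_add, her, sq]
  have h4 : (2:ℝ)^(p+4) * s = 1 := mul_inv_cancel₀ (by positivity)
  have h3 : (2:ℝ)^(p+3) * s = 1/2 := by
    have : (2:ℝ)^(p+4) = 2^(p+3) * 2 := by ring
    rw [this] at h4; linarith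
  have h5 : (2:ℝ)^(p+5) * s = 2 := by
    have : (2:ℝ)^(p+5) = 2^(p+4) * 2 := by ring
    rw [this]; linear_combination 2 * h4
  have g3 : (2:ℝ)^(p+3) * r = 1 := mul_inv_cancel₀ (by positivity)
  have g4 : (2:ℝ)^(p+4) * r = 2 := by
    have : (2:ℝ)^(p+4) = 2^(p+3) * 2 := by ring
    rw [this]; linear_combination 2 * g3
  have g5 : (2:ℝ)^(p+5) * r = 4 := by
    have : (2:ℝ)^(p+5) = 2^(p+3) * 4 := by ring
    rw [this]; linear_combination 4 * g3
  have aP : ∀ n : ℕ, iteratedDeriv n (fun y => Real.exp y + Real.exp (2*y)) y₁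
      = s + 2^n * s^2 := fun n => by rw [iterDeriv_exp_sum, hes, hes2]
  have bQ : ∀ n : ℕ, iteratedDeriv n (fun y => Real.exp y + Real.exp (2*y)) y₂
      = r + 2^n * r^2 := fun n => by rw [iterDeriv_exp_sum, her, her2]
  have aP1 : iteratedDeriv (p+3) (fun y => Real.exp y + Real.exp (2*y)) y₁ = 3/2 * s := by
    rw [aP]; linear_combination s * h3
  have aP2 : iteratedDeriv (p+4) (fun y => Real.exp y + Real.exp (2*y)) y₁ = 2 * s := by
    rw [aP]; linear_combination s * h4
  have aP3 : iteratedDeriv (p+5) (fun y => Real.exp y + Real.exp (2*y)) y₁ = 3 * s := by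
    rw [aP]; linear_combination s * h5
  have bQ1 : iteratedDeriv (p+3) (fun y => Real.exp y + Real.exp (2*y)) y₂ = 2 * r := by
    rw [bQ]; linear_combination r * g3
  have bQ2 : iteratedDeriv (p+4) (fun y => Real.exp y + Real.exp (2*y)) y₂ = 3 * r := by
    rw [bQ]; linear_combination r * g4
  have bQ3 : iteratedDeriv (p+5) (fun y => Real.exp y + Real.exp (2*y)) y₂ = 5 * r := by
    rw [bQ]; linear_combination r * g5
  constructor
  · -- the non-constancy of α
    refine ⟨y₁, y₂, ?_⟩
    rw [aP1, aP2, aP3, bQ1, bQ2, bQ3]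
    have e1 : (3/2 * s) * (3 * s) / (2 * s)^2 = 9/8 := by
      rw [div_eq_iff (by positivity)]; ring
    have e2 : (2 * r) * (5 * r) / (3 * r)^2 = 10/9 := by
      rw [div_eq_iff (by positivity)]; ring
    rw [e1, e2]; norm_num
  · -- the geometric consequence
    refine ⟨(fun _ => y₁), (fun _ => y₂), ?_⟩
    rintro ⟨φ, hφ⟩
    set v : Vp p := φ (opV p (eX p)) with hv_def
    set c : ℝ := wdg p (ix p) (iy p) (φ (eX p)) (φ (eY p)) with hc_def
    set t : ℝ := (φ (eY p)) (iy p) with ht_def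
    set W : Vp p := opV p (φ (eX p)) with hW_def
    have E : ∀ k : ℕ, p+1 ≤ k → k ≤ p+3 →
        iteratedDeriv (k+2) (fun y => Real.exp y + Real.exp (2*y)) y₁ • v
          = (c * iteratedDeriv (k+2) (fun y => Real.exp y + Real.exp (2*y)) y₂ * t^k) • W :=
      fun k hk hk' => key_eq p k hk (fun y => Real.exp y + Real.exp (2*y))
        (fun _ => y₁) (fun _ => y₂) φ (hφ k hk')
    have E1 : (3/2 * s) • v = (c * (2*r) * t^(p+1)) • W := by
      have := E (p+1) (by omega) (by omega)
      rwa [show p+1+2 = p+3 from by omega, aP1, bQ1] at this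
    have E2 : (2 * s) • v = (c * (3*r) * t^(p+2)) • W := by
      have := E (p+2) (by omega) (by omega)
      rwa [show p+2+2 = p+4 from by omega, aP2, bQ2] at this
    have E3 : (3 * s) • v = (c * (5*r) * t^(p+3)) • W := by
      have := E (p+3) (by omega) (by omega)
      rwa [show p+3+2 = p+5 from by omega, aP3, bQ3] at this
    have h0 : opV p (eX p) ≠ 0 := by
      intro h
      have := congrFun h (iyb p)
      rw [opV_iyb, eX_ix] at this
      simpa using this
    have hv : v ≠ 0 := by
      rw [hv_def]
      intro h
      exact h0 (by simpa using φ.injective (by simpa using h))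
    have hne : (3/2 * s) • v ≠ 0 := smul_ne_zero (by positivity) hv
    rw [E1] at hne
    have hW : W ≠ 0 := fun h => hne (by rw [h, smul_zero])
    have hμ : c * (2*r) * t^(p+1) ≠ 0 := fun h => hne (by rw [h, zero_smul])
    have hcne : c ≠ 0 := fun h => hμ (by rw [h]; ring)
    have htne : t ≠ 0 := fun h => hμ (by rw [h, zero_pow (by omega)]; ring)
    -- cross relations
    have R1 : (2*s) * (c * (2*r) * t^(p+1)) = (3/2*s) * (c * (3*r) * t^(p+2)) := by
      have h12 : ((2*s) * (c * (2*r) * t^(p+1))) • W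
          = ((3/2*s) * (c * (3*r) * t^(p+2))) • W := by
        rw [mul_smul (2*s), ← E1, mul_smul (3/2*s), ← E2, smul_smul, smul_smul]; congr 1; ring
      have hsub : ((2*s) * (c * (2*r) * t^(p+1)) - (3/2*s) * (c * (3*r) * t^(p+2))) • W = 0 := by
        rw [sub_smul, h12, sub_self]
      rcases smul_eq_zero.mp hsub with h | h
      · linarith [sub_eq_zero.mp h]
      · exact absurd h hW
    have R2 : (3*s) * (c * (3*r) * t^(p+2)) = (2*s) * (c * (5*r) * t^(p+3)) := by
      have h23 : ((3*s) * (c * (3*r) * t^(p+2))) • W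
          = ((2*s) * (c * (5*r) * t^(p+3))) • W := by
        rw [mul_smul (3*s), ← E2, mul_smul (2*s), ← E3, smul_smul, smul_smul]; congr 1; ring
      have hsub : ((3*s) * (c * (3*r) * t^(p+2)) - (2*s) * (c * (5*r) * t^(p+3))) • W = 0 := by
        rw [sub_smul, h23, sub_self]
      rcases smul_eq_zero.mp hsub with h | h
      · linarith [sub_eq_zero.mp h]
      · exact absurd h hW
    -- numeric contradiction
    have hK : s * r * c * t^(p+1) ≠ 0 := by
      apply mul_ne_zero (mul_ne_zero (mul_ne_zero (ne_of_gt hspos) (ne_of_gt hrpos)) hcne)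
      exact pow_ne_zero _ htne
    have f1 : (4 - 9/2 * t) * (s * r * c * t^(p+1)) = 0 := by linear_combination R1
    have f2 : (9 - 10 * t) * (s * r * c * t^(p+1) * t) = 0 := by linear_combination R2
    have t1 : (4:ℝ) - 9/2 * t = 0 := by
      rcases mul_eq_zero.mp f1 with h | h
      · exact h
      · exact absurd h hK
    have t2 : (9:ℝ) - 10 * t = 0 := by
      rcases mul_eq_zero.mp f2 with h | h
      · exact h
      · exact absurd h (mul_ne_zero hK htne)
    linarith
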